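/- Let H₁ and H₂ be finite-dimensional complex inner product spaces and let f, g : H₁ →ₗ[ℂ] H₂ be linear maps. Then TensorProduct.map f (LinearMap.adjoint f) = TensorProduct.map g (LinearMap.adjoint g) if and only if there exists z : ℂ with ‖z‖ = 1 and f = z • g. -/

import Mathlib

open scoped TensorProduct
open scoped InnerProductSpace

theorem stmt_2 {H₁ H₂ : Type*}
    [NormedAddCommGroup H₁] [InnerProductSpace ℂ H₁] [FiniteDimensional ℂ H₁]
    [NormedAddCommGroup H₂] [InnerProductSpace ℂ H₂] [FiniteDimensional ℂ H₂]
    (f g : H₁ →ₗ[ℂ] H₂) :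
    TensorProduct.map f (LinearMap.adjoint f) =
      TensorProduct.map g (LinearMap.adjoint g) ↔
    ∃ z : ℂ, ‖z‖ = 1 ∧ f = z • g := by
  constructor
  · intro h
    -- scalar identity
    have key : ∀ (u : H₂) (w x : H₁) (y : H₂),
        ⟪u, f x⟫_ℂ * ⟪f w, y⟫_ℂ = ⟪u, g x⟫_ℂ * ⟪g w, y⟫_ℂ := by
      intro u w x y
      let B : H₂ →ₗ[ℂ] H₁ →ₗ[ℂ] ℂ :=
        LinearMap.mk₂ ℂ (fun a b => ⟪u, a⟫_ℂ * ⟪w, b⟫_ℂ)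
          (fun a a' b => by simp only [inner_add_right]; ring)
          (fun c a b => by simp only [inner_smul_right, smul_eq_mul]; ring)
          (fun a b b' => by simp only [inner_add_right]; ring)
          (fun c a b => by simp only [inner_smul_right, smul_eq_mul]; ring)
      have h2 := congrArg (fun T : H₁ ⊗[ℂ] H₂ →ₗ[ℂ] H₂ ⊗[ℂ] H₁ =>
        TensorProduct.lift B (T (x ⊗ₜ[ℂ] y))) h
      simp only [TensorProduct.map_tmul, TensorProduct.lift.tmul] at h2
      have hf : ⟪w, LinearMap.adjoint f y⟫_ℂ = ⟪f w, y⟫_ℂ :=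
        LinearMap.adjoint_inner_right f w y
      have hg : ⟪w, LinearMap.adjoint g y⟫_ℂ = ⟪g w, y⟫_ℂ :=
        LinearMap.adjoint_inner_right g w y
      simpa [B, LinearMap.mk₂_apply, hf, hg] using h2
    have key2 : ∀ (u : H₂) (x w : H₁),
        ⟪f x, u⟫_ℂ • f w = ⟪g x, u⟫_ℂ • g w := by
      intro u x w
      apply ext_inner_right ℂ
      intro y
      rw [inner_smul_left, inner_smul_left, inner_conj_symm, inner_conj_symm]
      exact key u w x y
    by_cases hf0 : f = 0
    · refine ⟨1, by simp, ?_⟩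
      have hg0 : g = 0 := by
        ext x
        have := key2 (g x) x x
        rw [hf0] at this
        simp only [LinearMap.zero_apply, inner_zero_left, zero_smul] at this
        rcases smul_eq_zero.mp this.symm with hc | hc
        · simpa using (inner_self_eq_zero.mp hc)
        · simpa using hc
      rw [hf0, hg0]; simp
    · obtain ⟨x₀, hx₀⟩ : ∃ x, f x ≠ 0 := by
        by_contra hc
        push_neg at hc
        exact hf0 (LinearMap.ext fun x => hc x)
      set d : ℂ := ⟪f x₀, f x₀⟫_ℂ with hd
      set c : ℂ := ⟪g x₀, f x₀⟫_ℂ with hc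
      have hd0 : d ≠ 0 := by
        rw [hd]; exact fun hz => hx₀ (inner_self_eq_zero.mp hz)
      have hkey : ∀ w, d • f w = c • g w := fun w => key2 (f x₀) x₀ w
      have hc0 : c ≠ 0 := by
        intro hc0
        apply hx₀
        have := hkey x₀
        rw [hc0, zero_smul] at this
        exact (smul_eq_zero.mp this).resolve_left hd0
      refine ⟨c / d, ?_, ?_⟩
      · -- norm of z is 1
        have hfx : f x₀ = (c / d) • g x₀ := by
          rw [div_eq_mul_inv, mul_comm c, mul_smul, ← hkey x₀, smul_smul,
            inv_mul_cancel₀ hd0, one_smul]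
        have hgx0 : g x₀ ≠ 0 := by
          intro hz; apply hx₀; rw [hfx, hz, smul_zero]
        have hgg : ⟪g x₀, g x₀⟫_ℂ ≠ 0 := fun hz => hgx0 (inner_self_eq_zero.mp hz)
        have h3 := key2 (g x₀) x₀ x₀
        rw [hfx, inner_smul_left, smul_smul, mul_assoc] at h3
        -- h3 : (conj (c/d) * (⟪g x₀, g x₀⟫ * (c/d))) • g x₀ = ⟪g x₀, g x₀⟫ • g x₀
        have h5 : (starRingEnd ℂ) (c / d) * (⟪g x₀, g x₀⟫_ℂ * (c / d))
            = ⟪g x₀, g x₀⟫_ℂ := by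
          have h8 : ((starRingEnd ℂ) (c / d) * (⟪g x₀, g x₀⟫_ℂ * (c / d))
              - ⟪g x₀, g x₀⟫_ℂ) • g x₀ = 0 := by
            rw [sub_smul, h3, sub_self]
          rcases smul_eq_zero.mp h8 with h9 | h9
          · exact sub_eq_zero.mp h9
          · exact absurd h9 hgx0
        have h6 : (starRingEnd ℂ) (c / d) * (c / d) = 1 := by
          apply mul_right_cancel₀ hgg
          rw [one_mul]
          linear_combination h5
        have h7 : ‖c / d‖ ^ 2 = 1 := by
          have h10 := congrArg (fun z : ℂ => ‖z‖) h6
          simpa [norm_mul, Complex.norm_conj, sq] using h10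
        nlinarith [norm_nonneg (c / d)]
      · ext w
        simp only [LinearMap.smul_apply]
        rw [div_eq_mul_inv, mul_comm c, mul_smul, ← hkey w, smul_smul,
          inv_mul_cancel₀ hd0, one_smul]
  · rintro ⟨z, hz, rfl⟩
    have hadj : LinearMap.adjoint (z • g) = (starRingEnd ℂ z) • LinearMap.adjoint g :=
      LinearMap.adjoint.map_smulₛₗ z g
    rw [hadj, TensorProduct.map_smul_left, TensorProduct.map_smul_right, smul_smul]
    have : z * (starRingEnd ℂ) z = 1 := by
      rw [Complex.mul_conj]
      norm_cast
      rw [Complex.normSq_eq_norm_sq, hz, one_pow]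
    rw [this, one_smul]
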